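/- Let P be a 3×3 row-stochastic matrix with stationary probability row vector μ, and let Π be a 3×K state-dependent probability matrix with columns φ_k and Λ_k = diag(φ_k). If two rows of Π are equal (as vectors), then the observed process is reversible: for every r ≥ 1, every sequence of observation symbols s_1, …, s_r and all positive integers n_2, …, n_r, μ·Λ_{s_1}·P^{n_2}·Λ_{s_2}·⋯·P^{n_r}·Λ_{s_r}·e = μ·Λ_{s_r}·P^{n_r}·Λ_{s_{r−1}}·⋯·P^{n_2}·Λ_{s_1}·e. -/

import Mathlib

open Matrix

/-- The matrix product `Λ_{s₀} · P^{n₀} · Λ_{s₁} · ⋯ · P^{n_{r−1}} · Λ_{s_r}`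
appearing in the finite-dimensional distributions of the observed process of a
discrete-time hidden Markov model with 1-step transition probability matrix `P`
and state-dependent probability matrix `E`. -/
def obsProdD (P : Matrix (Fin 3) (Fin 3) ℝ) {K : ℕ}
    (E : Matrix (Fin 3) (Fin K) ℝ) {r : ℕ} (s : Fin (r + 1) → Fin K)
    (n : Fin r → ℕ) : Matrix (Fin 3) (Fin 3) ℝ :=
  Matrix.diagonal (fun a => E a (s 0)) *
    (List.ofFn fun i : Fin r =>
      P ^ n i * Matrix.diagonal fun a => E a (s i.succ)).prod

private lemma fin_rev_succ' {N : ℕ} (j : Fin N) :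
    Fin.rev (j.succ) = (Fin.rev j).castSucc := by
  ext; simp only [Fin.val_rev, Fin.val_succ, Fin.coe_castSucc]; omega

private lemma fin_rev_zero' (N : ℕ) : Fin.rev (0 : Fin (N + 1)) = Fin.last N := by
  ext; simp only [Fin.val_rev, Fin.val_zero, Fin.val_last]; omega

private lemma fin_castSucc_succ' {N : ℕ} (i : Fin N) :
    (Fin.castSucc i).succ = Fin.castSucc i.succ := by
  ext; simp only [Fin.val_succ, Fin.coe_castSucc]

/-- key summation identity using that the emission rows are constant off `m`. -/
private lemma keySum {K : ℕ} (E : Matrix (Fin 3) (Fin K) ℝ) (m : Fin 3) (g : Fin K → ℝ)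
    (hE : ∀ k a, E a k = if a = m then E m k else g k) (k : Fin K) (v w : Fin 3 → ℝ) :
    (∑ a, v a * E a k * w a) = g k * (∑ a, v a * w a) + (E m k - g k) * (v m * w m) := by
  have h1 : (∑ a, v a * E a k * w a)
      = ∑ a, (v a * w a * g k + (if a = m then v a * w a * (E m k - g k) else 0)) := by
    refine Finset.sum_congr rfl fun a _ => ?_
    by_cases h : a = m <;> simp [hE k a, h] <;> ring
  rw [h1, Finset.sum_add_distrib, Finset.sum_ite_eq' Finset.univ m]
  simp [← Finset.sum_mul]
  ring

/-- one step of the bisimulation invariant. -/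
private lemma stepInv (P : Matrix (Fin 3) (Fin 3) ℝ) (μ : Fin 3 → ℝ)
    {K : ℕ} (E : Matrix (Fin 3) (Fin K) ℝ) (m : Fin 3) (g : Fin K → ℝ)
    (hE : ∀ k a, E a k = if a = m then E m k else g k)
    (hP1v : ∀ t : ℕ, P ^ t *ᵥ (fun _ => (1 : ℝ)) = fun _ => 1)
    (hstatv : ∀ t : ℕ, μ ᵥ* P ^ t = μ)
    (k : ℕ) (ks : Fin K) (u y : Fin 3 → ℝ)
    (h1 : u ⬝ᵥ (fun _ => (1 : ℝ)) = μ ⬝ᵥ y)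
    (h2 : ∀ t : ℕ, (u ᵥ* P ^ t) m = μ m * (P ^ t *ᵥ y) m) :
    ((u ᵥ* (P ^ k * Matrix.diagonal (fun a => E a ks))) ⬝ᵥ (fun _ => (1 : ℝ))
        = μ ⬝ᵥ ((Matrix.diagonal (fun a => E a ks)) *ᵥ (P ^ k *ᵥ y)))
      ∧ ∀ t : ℕ, ((u ᵥ* (P ^ k * Matrix.diagonal (fun a => E a ks))) ᵥ* P ^ t) m
          = μ m * ((P ^ t *ᵥ ((Matrix.diagonal (fun a => E a ks)) *ᵥ (P ^ k *ᵥ y))) m) := by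
  set w : Fin 3 → ℝ := u ᵥ* P ^ k with hw0
  set z : Fin 3 → ℝ := P ^ k *ᵥ y with hz0
  have kS1 : ∀ v : Fin 3 → ℝ,
      (∑ a, v a * E a ks) = g ks * (∑ a, v a) + (E m ks - g ks) * v m := by
    intro v
    have h := keySum E m g hE ks v (fun _ => (1 : ℝ))
    simpa using h
  have hΛrow : ∀ v : Fin 3 → ℝ,
      v ᵥ* Matrix.diagonal (fun a => E a ks) = fun a => v a * E a ks := by
    intro v; funext a; exact vecMul_diagonal v _ a
  have hΛcol : ∀ v : Fin 3 → ℝ,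
      Matrix.diagonal (fun a => E a ks) *ᵥ v = fun a => E a ks * v a := by
    intro v; funext a; exact mulVec_diagonal _ v a
  have hwsum : (∑ a, w a) = u ⬝ᵥ (fun _ => (1 : ℝ)) := by
    have h := dotProduct_mulVec u (P ^ k) (fun _ => (1 : ℝ))
    rw [hP1v k] at h
    simpa [dotProduct] using h.symm
  have hzsum : (∑ a, μ a * z a) = μ ⬝ᵥ y := by
    have h := dotProduct_mulVec μ (P ^ k) y
    rw [hstatv k] at h
    simpa [dotProduct, hz0] using h
  have hwm : w m = μ m * z m := h2 k
  constructor
  · have la : (u ᵥ* (P ^ k * Matrix.diagonal (fun a => E a ks))) ⬝ᵥ (fun _ => (1 : ℝ))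
        = ∑ a, w a * E a ks := by
      rw [← vecMul_vecMul, hΛrow]
      simp [dotProduct, hw0]
    have lb : μ ⬝ᵥ ((Matrix.diagonal (fun a => E a ks)) *ᵥ z)
        = ∑ a, (μ a * z a) * E a ks := by
      rw [hΛcol]
      simp only [dotProduct]
      exact Finset.sum_congr rfl fun a _ => by ring
    rw [la, lb, kS1 w, kS1 (fun a => μ a * z a)]
    simp only [hwsum, hzsum, h1, hwm]
  · intro t
    have la : ((u ᵥ* (P ^ k * Matrix.diagonal (fun a => E a ks))) ᵥ* P ^ t) m
        = ∑ a, w a * E a ks * (P ^ t) a m := by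
      rw [← vecMul_vecMul, hΛrow]
      simp [vecMul, dotProduct, hw0]
    have lb : ((P ^ t *ᵥ ((Matrix.diagonal (fun a => E a ks)) *ᵥ z)) m)
        = ∑ a, ((P ^ t) m a * z a) * E a ks := by
      rw [hΛcol]
      simp only [mulVec, dotProduct]
      exact Finset.sum_congr rfl fun a _ => by ring
    have e3 : (∑ a, w a * (P ^ t) a m) = μ m * (P ^ (k + t) *ᵥ y) m := by
      have hvv : (w ᵥ* P ^ t) m = ∑ a, w a * (P ^ t) a m := by
        simp [vecMul, dotProduct]
      rw [← hvv, hw0, vecMul_vecMul, ← pow_add]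
      exact h2 (k + t)
    have e4 : (∑ a, (P ^ t) m a * z a) = (P ^ (k + t) *ᵥ y) m := by
      have hvv : (P ^ t *ᵥ z) m = ∑ a, (P ^ t) m a * z a := by
        simp [mulVec, dotProduct]
      rw [← hvv, hz0, mulVec_mulVec, ← pow_add, Nat.add_comm t k]
    rw [la, lb, keySum E m g hE ks w (fun a => (P ^ t) a m),
      kS1 (fun a => (P ^ t) m a * z a)]
    simp only [e3, e4, hwm]
    ring

private lemma obs_zero (P : Matrix (Fin 3) (Fin 3) ℝ) {K : ℕ}
    (E : Matrix (Fin 3) (Fin K) ℝ) (s : Fin 1 → Fin K) (n : Fin 0 → ℕ) :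
    obsProdD P E s n = Matrix.diagonal (fun a => E a (s 0)) := by
  simp [obsProdD]

private lemma obs_concat (P : Matrix (Fin 3) (Fin 3) ℝ) {K : ℕ}
    (E : Matrix (Fin 3) (Fin K) ℝ) {r : ℕ} (s : Fin (r + 2) → Fin K) (n : Fin (r + 1) → ℕ) :
    obsProdD P E s n = obsProdD P E (s ∘ Fin.castSucc) (n ∘ Fin.castSucc)
      * (P ^ n (Fin.last r) * Matrix.diagonal (fun a => E a (s (Fin.last (r + 1))))) := by
  unfold obsProdD
  rw [List.ofFn_succ', List.prod_concat, ← mul_assoc]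
  simp only [Function.comp_apply, Fin.castSucc_zero, fin_castSucc_succ', Fin.succ_last]

private lemma obs_cons (P : Matrix (Fin 3) (Fin 3) ℝ) {K : ℕ}
    (E : Matrix (Fin 3) (Fin K) ℝ) {r : ℕ} (s : Fin (r + 2) → Fin K) (n : Fin (r + 1) → ℕ) :
    obsProdD P E (s ∘ Fin.rev) (n ∘ Fin.rev)
      = Matrix.diagonal (fun a => E a (s (Fin.last (r + 1)))) *
        (P ^ n (Fin.last r) *
          obsProdD P E ((s ∘ Fin.castSucc) ∘ Fin.rev) ((n ∘ Fin.castSucc) ∘ Fin.rev)) := by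
  unfold obsProdD
  rw [List.ofFn_succ, List.prod_cons]
  simp only [Function.comp_apply, fin_rev_succ', fin_rev_zero']
  simp [mul_assoc]

private lemma auxMain (P : Matrix (Fin 3) (Fin 3) ℝ) (μ : Fin 3 → ℝ)
    {K : ℕ} (E : Matrix (Fin 3) (Fin K) ℝ) (m : Fin 3) (g : Fin K → ℝ)
    (hE : ∀ k a, E a k = if a = m then E m k else g k)
    (hP1v : ∀ t : ℕ, P ^ t *ᵥ (fun _ => (1 : ℝ)) = fun _ => 1)
    (hstatv : ∀ t : ℕ, μ ᵥ* P ^ t = μ) :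
    ∀ (r : ℕ) (s : Fin (r + 1) → Fin K) (n : Fin r → ℕ),
      ((μ ᵥ* obsProdD P E s n) ⬝ᵥ (fun _ => (1 : ℝ))
          = μ ⬝ᵥ (obsProdD P E (s ∘ Fin.rev) (n ∘ Fin.rev) *ᵥ fun _ => (1 : ℝ)))
        ∧ ∀ t : ℕ, ((μ ᵥ* obsProdD P E s n) ᵥ* P ^ t) m
            = μ m * ((P ^ t *ᵥ (obsProdD P E (s ∘ Fin.rev) (n ∘ Fin.rev) *ᵥ fun _ => (1 : ℝ))) m) := by
  intro r
  induction r with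
  | zero =>
    intro s n
    have hsrev : (s ∘ Fin.rev) = s := by
      funext i
      have hi : Fin.rev i = i := by
        ext; simp only [Fin.val_rev]; omega
      simp [Function.comp_apply, hi]
    rw [hsrev, obs_zero P E s n, obs_zero P E s (n ∘ Fin.rev)]
    have hb1 : μ ⬝ᵥ (fun _ => (1 : ℝ)) = μ ⬝ᵥ (fun _ => (1 : ℝ)) := rfl
    have hb2 : ∀ t : ℕ, (μ ᵥ* P ^ t) m = μ m * (P ^ t *ᵥ (fun _ => (1 : ℝ))) m := by
      intro t; rw [hstatv t, hP1v t]; simp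
    have h := stepInv P μ E m g hE hP1v hstatv 0 (s 0) μ (fun _ => (1 : ℝ)) hb1 hb2
    rw [pow_zero, Matrix.one_mul, Matrix.one_mulVec] at h
    exact h
  | succ r IH =>
    intro s n
    rw [obs_concat, obs_cons]
    obtain ⟨ih1, ih2⟩ := IH (s ∘ Fin.castSucc) (n ∘ Fin.castSucc)
    have h := stepInv P μ E m g hE hP1v hstatv (n (Fin.last r)) (s (Fin.last (r + 1)))
      (μ ᵥ* obsProdD P E (s ∘ Fin.castSucc) (n ∘ Fin.castSucc))
      (obsProdD P E ((s ∘ Fin.castSucc) ∘ Fin.rev) ((n ∘ Fin.castSucc) ∘ Fin.rev) *ᵥ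
        fun _ => (1 : ℝ)) ih1 ih2
    obtain ⟨ha, hb⟩ := h
    constructor
    · rw [← vecMul_vecMul, ← mulVec_mulVec, ← mulVec_mulVec]
      exact ha
    · intro t
      rw [← vecMul_vecMul, ← mulVec_mulVec, ← mulVec_mulVec]
      exact hb t

/-- If two rows of the state-dependent probability matrix are equal,
then the observed process of the discrete-time three-state hidden Markov model is
reversible. -/
theorem observed_reversible_of_two_rows_eq_discrete
    (P : Matrix (Fin 3) (Fin 3) ℝ) (μ : Fin 3 → ℝ)
    {K : ℕ} (E : Matrix (Fin 3) (Fin K) ℝ)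
    (hP0 : ∀ i j : Fin 3, 0 ≤ P i j)
    (hP1 : ∀ i : Fin 3, ∑ j, P i j = 1)
    (hpos : ∀ i, 0 < μ i) (hsum : μ 0 + μ 1 + μ 2 = 1)
    (hstat : μ ᵥ* P = μ)
    (hE0 : ∀ a k, 0 ≤ E a k) (hE1 : ∀ a : Fin 3, ∑ k, E a k = 1)
    (hsing : ∃ i j : Fin 3, i ≠ j ∧ (fun k => E i k) = (fun k => E j k)) :
    ∀ (r : ℕ) (s : Fin (r + 1) → Fin K) (n : Fin r → ℕ), (∀ i, 1 ≤ n i) →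
      (μ ᵥ* obsProdD P E s n) ⬝ᵥ (fun _ => (1 : ℝ)) =
        (μ ᵥ* obsProdD P E (s ∘ Fin.rev) (n ∘ Fin.rev)) ⬝ᵥ (fun _ => (1 : ℝ)) := by
  intro r s n _
  obtain ⟨i, j, hij, hrow⟩ := hsing
  have hm3 : ∀ i j : Fin 3, i ≠ j → ∃ m : Fin 3, m ≠ i ∧ m ≠ j := by decide
  obtain ⟨m, hmi, hmj⟩ := hm3 i j hij
  have cover3 : ∀ m i j a : Fin 3, m ≠ i → m ≠ j → i ≠ j → a = i ∨ a = j ∨ a = m := by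
    decide
  have hE : ∀ (k : Fin K) (a : Fin 3), E a k = if a = m then E m k else E i k := by
    intro k a
    rcases cover3 m i j a hmi hmj hij with h | h | h
    · subst h; rw [if_neg (by exact fun hh => hmi hh.symm)]
    · subst h
      rw [if_neg (by exact fun hh => hmj hh.symm)]
      exact (congrFun hrow.symm k)
    · subst h; rw [if_pos rfl]
  have hP1v : ∀ t : ℕ, P ^ t *ᵥ (fun _ => (1 : ℝ)) = fun _ => 1 := by
    intro t
    induction t with
    | zero => simp
    | succ t ih =>
      rw [pow_succ, ← mulVec_mulVec]
      have hP : P *ᵥ (fun _ => (1 : ℝ)) = fun _ => 1 := by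
        funext x; simp [mulVec, dotProduct, hP1 x]
      rw [hP, ih]
  have hstatv : ∀ t : ℕ, μ ᵥ* P ^ t = μ := by
    intro t
    induction t with
    | zero => simp
    | succ t ih => rw [pow_succ, ← vecMul_vecMul, ih, hstat]
  have h := (auxMain P μ E m (fun k => E i k) hE hP1v hstatv r s n).1
  rw [h, dotProduct_mulVec]
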